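/- The tensor element E(x,y,z) = y ⊗ e^{−x} + 2πi ⊗ e^{−(z−xy)/(2πi)} ∈ ℂ ⊗_ℤ ℂ* is invariant under the transformation (x,y,z) ↦ (x + m₁, y + n₁, z + m₁y + m₂) with m₁, n₁ ∈ 2πiℤ and m₂ ∈ (2πi)²ℤ. -/

import Mathlib

open TensorProduct

noncomputable section

/-- `2πi`. -/
def twoPiI : ℂ := 2 * Real.pi * Complex.I

/-- `exp w` as a unit of `ℂ`. -/
def expUnit (w : ℂ) : ℂˣ := Units.mk0 (Complex.exp w) (Complex.exp_ne_zero w)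

/-- The extension class `E(x,y,z) = y ⊗ e^{−x} + 2πi ⊗ e^{−(z−xy)/(2πi)}`
in `ℂ ⊗_ℤ ℂ*` (equation (38) of the paper), with `ℂ*` written additively. -/
def extClass (x y z : ℂ) : ℂ ⊗[ℤ] Additive ℂˣ :=
  y ⊗ₜ[ℤ] Additive.ofMul (expUnit (-x))
    + twoPiI ⊗ₜ[ℤ] Additive.ofMul (expUnit (-(z - x * y) / twoPiI))

/-- exp as an additive map into `Additive ℂˣ`. -/
def EE (w : ℂ) : Additive ℂˣ := Additive.ofMul (expUnit w)

lemma EE_add (a b : ℂ) : EE (a + b) = EE a + EE b := by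
  show Additive.ofMul (expUnit (a + b)) = Additive.ofMul (expUnit a * expUnit b)
  congr 1
  ext
  exact Complex.exp_add a b

lemma EE_neg (a : ℂ) : EE (-a) = - EE a := by
  have : EE (a + -a) = EE a + EE (-a) := EE_add a (-a)
  simp only [add_neg_cancel] at this
  have h0 : EE 0 = 0 := by
    show Additive.ofMul (expUnit 0) = 0
    have : expUnit 0 = 1 := by ext; simp [expUnit]
    simp [this]
  rw [h0] at this
  exact eq_neg_of_add_eq_zero_right this.symm

lemma EE_zsmul (k : ℤ) (a : ℂ) : EE (k * a) = k • EE a := by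
  show Additive.ofMul (expUnit (k * a)) = k • Additive.ofMul (expUnit a)
  rw [← ofMul_zpow]
  congr 1
  ext
  push_cast
  show Complex.exp (k * a) = (expUnit a : ℂ) ^ k
  rw [show ((expUnit a : ℂ)) = Complex.exp a from rfl, ← Complex.exp_int_mul]

lemma twoPiI_ne_zero : twoPiI ≠ 0 := by
  simp [twoPiI, Real.pi_ne_zero, Complex.I_ne_zero, Complex.ofReal_ne_zero]

lemma EE_period (k : ℤ) : EE (twoPiI * k) = 0 := by
  show Additive.ofMul (expUnit (twoPiI * k)) = 0
  have : expUnit (twoPiI * k) = 1 := by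
    ext
    show Complex.exp (twoPiI * k) = 1
    rw [show twoPiI * (k : ℂ) = (k : ℂ) * (2 * Real.pi * Complex.I) by
      rw [twoPiI]; ring]
    exact Complex.exp_int_mul_two_pi_mul_I k
  simp [this]

/-- `E(x,y,z)` is invariant under `(x,y,z) ↦ (x+m₁, y+n₁, z+m₁y+m₂)` with
`m₁, n₁ ∈ 2πiℤ` and `m₂ ∈ (2πi)²ℤ`. -/
theorem stmt17 (x y z m1 n1 m2 : ℂ)
    (hm1 : ∃ k : ℤ, m1 = twoPiI * k)
    (hn1 : ∃ k : ℤ, n1 = twoPiI * k)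
    (hm2 : ∃ k : ℤ, m2 = twoPiI ^ 2 * k) :
    extClass (x + m1) (y + n1) (z + m1 * y + m2) = extClass x y z := by
  obtain ⟨km, hkm⟩ := hm1
  obtain ⟨kn, hkn⟩ := hn1
  obtain ⟨k2, hk2⟩ := hm2
  have T0 := twoPiI_ne_zero
  -- rewrite the two exponents
  have e1 : -(x + m1) = -x + twoPiI * (-km : ℤ) := by rw [hkm]; push_cast; ring
  have e2 : -(z + m1 * y + m2 - (x + m1) * (y + n1)) / twoPiI
      = -(z - x * y) / twoPiI + ((kn : ℤ) * x + twoPiI * ((km * kn - k2 : ℤ))) := by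
    rw [hkm, hkn, hk2]
    field_simp
    push_cast
    ring
  show (y + n1) ⊗ₜ[ℤ] EE (-(x + m1))
      + twoPiI ⊗ₜ[ℤ] EE (-(z + m1 * y + m2 - (x + m1) * (y + n1)) / twoPiI)
      = y ⊗ₜ[ℤ] EE (-x) + twoPiI ⊗ₜ[ℤ] EE (-(z - x * y) / twoPiI)
  rw [e1, e2]
  simp only [EE_add, EE_period, add_zero, EE_zsmul kn x,
    TensorProduct.tmul_add, TensorProduct.tmul_smul,
    TensorProduct.add_tmul]
  have hsm : twoPiI ⊗ₜ[ℤ] (kn • EE x) = n1 ⊗ₜ[ℤ] EE x := by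
    rw [← TensorProduct.smul_tmul kn twoPiI (EE x)]
    congr 1
    rw [hkn, zsmul_eq_mul]; ring
  rw [hsm, EE_neg]
  have : n1 ⊗ₜ[ℤ] (-EE x) = - (n1 ⊗ₜ[ℤ] EE x) := by
    rw [TensorProduct.tmul_neg]
  rw [this]
  abel

end
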